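/- Let $x \sim y$ (distance 1) in a finite graph-metric space, $P$ a stochastic matrix, and suppose there is a coupling $\Pi$ of $(\delta_x P, \delta_y P)$ supported on pairs $(w,z)$ with $d(w,z) \leq 1$ and satisfying $\sum_{w,z}\Pi(w,z)d(w,z) \leq 1-K$ for some $K \in [0,1]$. Then for every $p \in [1,\infty)$, $W_p(\delta_x P, \delta_y P) \leq 1 - K/p$. -/

import Mathlib

theorem stmt16 {Ω : Type*} [Fintype Ω] [Nonempty Ω]
    (d : Ω → Ω → ℝ)
    (hd_nonneg : ∀ x y, 0 ≤ d x y)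
    (hd_eq : ∀ x y, d x y = 0 ↔ x = y)
    (hd_symm : ∀ x y, d x y = d y x)
    (hd_tri : ∀ x y z, d x z ≤ d x y + d y z)
    (hd_int : ∀ x y, ∃ n : ℕ, d x y = n)
    (P : Ω → Ω → ℝ)
    (hP : (∀ x y, 0 ≤ P x y) ∧ ∀ x, ∑ y, P x y = 1)
    (x y : Ω) (hxy : d x y = 1)
    (K : ℝ) (hK : K ∈ Set.Icc (0 : ℝ) 1)
    (Pi : Ω → Ω → ℝ)
    (hPi : (∀ w z, 0 ≤ Pi w z) ∧ (∀ w, ∑ z, Pi w z = P x w) ∧ (∀ z, ∑ w, Pi w z = P y z))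
    (hsupp : ∀ w z, Pi w z ≠ 0 → d w z ≤ 1)
    (hmass : ∑ w, ∑ z, Pi w z * d w z ≤ 1 - K)
    (p : ℝ) (hp : 1 ≤ p)
    (W : (Ω → ℝ) → (Ω → ℝ) → ℝ)
    (hW : ∀ μ ν, W μ ν = (sInf {r : ℝ | ∃ Γ : Ω → Ω → ℝ,
      (∀ v w, 0 ≤ Γ v w) ∧ (∀ v, ∑ w, Γ v w = μ v) ∧ (∀ w, ∑ v, Γ v w = ν w) ∧
      r = ∑ v, ∑ w, Γ v w * d v w ^ p}) ^ (1 / p)) :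
    W (fun v => P x v) (fun v => P y v) ≤ 1 - K / p := by
  obtain ⟨hK0, hK1⟩ := hK
  have hp0 : (0:ℝ) < p := lt_of_lt_of_le one_pos hp
  set S := {r : ℝ | ∃ Γ : Ω → Ω → ℝ,
      (∀ v w, 0 ≤ Γ v w) ∧ (∀ v, ∑ w, Γ v w = (fun v => P x v) v) ∧
      (∀ w, ∑ v, Γ v w = (fun v => P y v) w) ∧
      r = ∑ v, ∑ w, Γ v w * d v w ^ p} with hS
  -- key: on support, d^p = d
  have hterm : ∀ w z, Pi w z * d w z ^ p = Pi w z * d w z := by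
    intro w z
    by_cases h : Pi w z = 0
    · simp [h]
    · have hle := hsupp w z h
      obtain ⟨n, hn⟩ := hd_int w z
      have hn0 : (0:ℝ) ≤ d w z := hd_nonneg w z
      match n, hn with
      | 0, hn => simp [hn, Real.zero_rpow (ne_of_gt hp0)]
      | 1, hn => simp [hn]
      | (m+2), hn => rw [hn] at hle; exfalso; push_cast at hle; linarith
  have hr0mem : (∑ w, ∑ z, Pi w z * d w z ^ p) ∈ S := by
    exact ⟨Pi, hPi.1, hPi.2.1, hPi.2.2, rfl⟩
  have hr0 : (∑ w, ∑ z, Pi w z * d w z ^ p) ≤ 1 - K := by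
    calc (∑ w, ∑ z, Pi w z * d w z ^ p) = ∑ w, ∑ z, Pi w z * d w z := by
          simp only [hterm]
      _ ≤ 1 - K := hmass
  have hlb : ∀ r ∈ S, (0:ℝ) ≤ r := by
    rintro r ⟨Γ, hΓ0, -, -, rfl⟩
    exact Finset.sum_nonneg fun v _ => Finset.sum_nonneg fun w _ =>
      mul_nonneg (hΓ0 v w) (Real.rpow_nonneg (hd_nonneg v w) p)
  have hbdd : BddBelow S := ⟨0, hlb⟩
  have hinf_nonneg : 0 ≤ sInf S := le_csInf ⟨_, hr0mem⟩ hlb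
  have hinf_le : sInf S ≤ 1 - K := le_trans (csInf_le hbdd hr0mem) hr0
  have hKp : 0 ≤ 1 - K / p := by
    have : K / p ≤ 1 := by
      rw [div_le_one hp0]; linarith
    linarith
  -- Bernoulli: 1 - K ≤ (1 - K/p)^p
  have hbern : 1 - K ≤ (1 - K / p) ^ p := by
    have hs : (-1:ℝ) ≤ -(K / p) := by
      have : K / p ≤ 1 := by rw [div_le_one hp0]; linarith
      linarith
    have := one_add_mul_self_le_rpow_one_add hs hp
    have hmul : p * -(K / p) = -K := by field_simp
    rw [hmul] at this
    calc 1 - K = 1 + -K := by ring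
      _ ≤ (1 + -(K/p)) ^ p := this
      _ = (1 - K/p) ^ p := by ring_nf
  rw [hW]
  calc (sInf S) ^ (1/p) ≤ ((1 - K/p)^p) ^ (1/p) :=
        Real.rpow_le_rpow hinf_nonneg (le_trans hinf_le hbern) (by positivity)
    _ = (1 - K/p) ^ (p * (1/p)) := (Real.rpow_mul hKp p (1/p)).symm
    _ = 1 - K/p := by rw [mul_one_div_cancel (ne_of_gt hp0), Real.rpow_one]
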